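/- Let K be a field with char K ≠ 2 and let r ∈ Kˣ. The map sending a pair of nonzero vectors ((u₀,u₁),(v₀,v₁)) ∈ (K²∖{0})² to the vector (r(u₀v₁+u₁v₀), 2ru₀v₀, 2ru₁v₁, u₀v₁−u₁v₀) ∈ K⁴ never takes the value 0, descends to a well-defined map κ_r : ℙ¹(K) × ℙ¹(K) → ℙ³(K), and κ_r is a bijection from ℙ¹(K) × ℙ¹(K) onto the set of points of ℙ³(K) whose representatives (x₀,x₁,x₂,x₃) satisfy x₀² − x₁x₂ − r²x₃² = 0. -/

import Mathlib

/-- The map `((u₀,u₁),(v₀,v₁)) ↦ (r(u₀v₁+u₁v₀), 2ru₀v₀, 2ru₁v₁, u₀v₁−u₁v₀)`. -/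
def kappaVec {K : Type*} [Field K] (r : K) (u v : Fin 2 → K) : Fin 4 → K :=
  ![r * (u 0 * v 1 + u 1 * v 0), 2 * r * (u 0 * v 0), 2 * r * (u 1 * v 1),
    u 0 * v 1 - u 1 * v 0]

namespace Stmt1Aux

variable {K : Type*} [Field K]

lemma kappa_smul (r a b : K) (u v : Fin 2 → K) :
    kappaVec r (a • u) (b • v) = (a * b) • kappaVec r u v := by
  funext i
  fin_cases i <;> simp [kappaVec] <;> ring

lemma products {r : K} (hr : r ≠ 0) (h2 : (2 : K) ≠ 0) {u v u' v' : Fin 2 → K} {c : K}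
    (h : kappaVec r u v = c • kappaVec r u' v') :
    ∀ i j, u i * v j = c * (u' i * v' j) := by
  have h0 := congrFun h 0
  have h1 := congrFun h 1
  have h2' := congrFun h 2
  have h3 := congrFun h 3
  simp only [kappaVec, Pi.smul_apply, smul_eq_mul, Matrix.cons_val_zero, Matrix.cons_val_one,
    Matrix.head_cons, Matrix.cons_val_two, Matrix.tail_cons, Matrix.cons_val_three] at h0 h1 h2' h3
  have e00 : u 0 * v 0 = c * (u' 0 * v' 0) := by
    apply mul_left_cancel₀ (mul_ne_zero h2 hr); linear_combination h1
  have e01 : u 0 * v 1 = c * (u' 0 * v' 1) := by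
    apply mul_left_cancel₀ (mul_ne_zero h2 hr); linear_combination h0 + r * h3
  have e10 : u 1 * v 0 = c * (u' 1 * v' 0) := by
    apply mul_left_cancel₀ (mul_ne_zero h2 hr); linear_combination h0 - r * h3
  have e11 : u 1 * v 1 = c * (u' 1 * v' 1) := by
    apply mul_left_cancel₀ (mul_ne_zero h2 hr); linear_combination h2'
  intro i j
  fin_cases i <;> fin_cases j <;> assumption

lemma line {u v u' v' : Fin 2 → K} {c : K} (hc : c ≠ 0) (hu : u ≠ 0) (hv : v ≠ 0)
    (h : ∀ i j, u i * v j = c * (u' i * v' j)) : ∃ s : K, s ≠ 0 ∧ u = s • u' := by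
  obtain ⟨j, hj⟩ : ∃ j, v j ≠ 0 := by
    by_contra hcon; push_neg at hcon; exact hv (funext hcon)
  have hv'j : v' j ≠ 0 := by
    intro h0
    apply hu; funext i
    have hij := h i j
    rw [h0, mul_zero, mul_zero] at hij
    simpa using (mul_eq_zero.mp hij).resolve_right hj
  refine ⟨c * v' j / v j, div_ne_zero (mul_ne_zero hc hv'j) hj, ?_⟩
  funext i
  have hij := h i j
  simp only [Pi.smul_apply, smul_eq_mul]
  field_simp
  linear_combination hij

lemma nonvanish {r : K} (hr : r ≠ 0) (h2 : (2 : K) ≠ 0) {u v : Fin 2 → K}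
    (hu : u ≠ 0) (hv : v ≠ 0) : kappaVec r u v ≠ 0 := by
  intro h
  have hz : kappaVec r u v = (1 : K) • kappaVec r (0 : Fin 2 → K) 0 := by
    rw [h]; funext i; fin_cases i <;> simp [kappaVec]
  have hp := products hr h2 hz
  obtain ⟨i, hi⟩ : ∃ i, u i ≠ 0 := by
    by_contra hcon; push_neg at hcon; exact hu (funext hcon)
  obtain ⟨j, hj⟩ : ∃ j, v j ≠ 0 := by
    by_contra hcon; push_neg at hcon; exact hv (funext hcon)
  have := hp i j
  simp at this
  exact this.elim hi hj

end Stmt1Aux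

namespace Stmt1Aux

open Projectivization

lemma quad_mem {K : Type*} [Field K] (r : K) (x : Fin 4 → K) (hx : x ≠ 0) :
    ((Projectivization.mk K x hx).rep 0 ^ 2 - (Projectivization.mk K x hx).rep 1 *
        (Projectivization.mk K x hx).rep 2 - r ^ 2 * (Projectivization.mk K x hx).rep 3 ^ 2 = 0)
      ↔ x 0 ^ 2 - x 1 * x 2 - r ^ 2 * x 3 ^ 2 = 0 := by
  obtain ⟨a, ha⟩ := (mk_eq_mk_iff K _ _ (rep_nonzero _) hx).mp (mk_rep (Projectivization.mk K x hx))
  have h0 := congrFun ha 0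
  have h1 := congrFun ha 1
  have h2 := congrFun ha 2
  have h3 := congrFun ha 3
  simp only [Pi.smul_apply, Units.smul_def, smul_eq_mul] at h0 h1 h2 h3
  rw [← h0, ← h1, ← h2, ← h3]
  have key : ((a:K) * x 0) ^ 2 - (a:K) * x 1 * ((a:K) * x 2) - r ^ 2 * ((a:K) * x 3) ^ 2
      = (a:K)^2 * (x 0 ^ 2 - x 1 * x 2 - r ^ 2 * x 3 ^ 2) := by ring
  rw [key, mul_eq_zero]
  simp [pow_eq_zero_iff, a.ne_zero]

end Stmt1Aux

namespace Stmt1Aux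

lemma surj_construct {K : Type*} [Field K] {r : K} (hr : r ≠ 0) (h2 : (2:K) ≠ 0)
    (x : Fin 4 → K) (hx : x ≠ 0)
    (hq : x 0 ^ 2 - x 1 * x 2 - r ^ 2 * x 3 ^ 2 = 0) :
    ∃ u v : Fin 2 → K, u ≠ 0 ∧ v ≠ 0 ∧ kappaVec r u v = x := by
  by_cases hx1 : x 1 ≠ 0
  · refine ⟨![1, (x 0 - r * x 3) / x 1], ![x 1 / (2*r), (x 0 + r * x 3)/(2*r)], ?_, ?_, ?_⟩
    · intro h; have := congrFun h 0; simp at this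
    · intro h
      have h0 := congrFun h 0
      simp only [Matrix.cons_val_zero, Pi.zero_apply, div_eq_zero_iff] at h0
      rcases h0 with h' | h'
      · exact hx1 h'
      · exact mul_ne_zero h2 hr h'
    · funext i; fin_cases i
      · show r * (1 * ((x 0 + r * x 3)/(2*r)) + (x 0 - r * x 3) / x 1 * (x 1 / (2*r))) = x 0
        field_simp; ring
      · show 2 * r * (1 * (x 1 / (2*r))) = x 1
        field_simp
      · show 2 * r * ((x 0 - r * x 3) / x 1 * ((x 0 + r * x 3)/(2*r))) = x 2
        field_simp; linear_combination hq
      · show 1 * ((x 0 + r * x 3)/(2*r)) - (x 0 - r * x 3) / x 1 * (x 1 / (2*r)) = x 3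
        field_simp; ring
  · push_neg at hx1
    by_cases ha : x 0 + r * x 3 = 0
    · -- third case
      refine ⟨![0, 1], ![(x 0 - r * x 3)/(2*r), x 2/(2*r)], ?_, ?_, ?_⟩
      · intro h; have := congrFun h 1; simp at this
      · intro h
        have hv0 := congrFun h 0
        have hv1 := congrFun h 1
        simp only [Matrix.cons_val_zero, Matrix.cons_val_one, Matrix.head_cons,
          Pi.zero_apply, div_eq_zero_iff] at hv0 hv1
        have hB : x 0 - r * x 3 = 0 := by
          rcases hv0 with h' | h'
          · exact h'
          · exact absurd h' (mul_ne_zero h2 hr)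
        have hx2 : x 2 = 0 := by
          rcases hv1 with h' | h'
          · exact h'
          · exact absurd h' (mul_ne_zero h2 hr)
        have hx0 : x 0 = 0 := by
          have h2x0 : 2 * x 0 = 0 := by linear_combination ha + hB
          exact (mul_eq_zero.mp h2x0).resolve_left h2
        have hx3 : x 3 = 0 := by
          have h2x3 : 2 * (r * x 3) = 0 := by linear_combination ha - hB
          exact (mul_eq_zero.mp ((mul_eq_zero.mp h2x3).resolve_left h2)).resolve_left hr
        apply hx; funext i; fin_cases i <;> simp [hx0, hx1, hx2, hx3]
      · funext i; fin_cases i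
        · show r * (0 * (x 2/(2*r)) + 1 * ((x 0 - r * x 3)/(2*r))) = x 0
          field_simp; linear_combination (-(1:K)) * ha
        · show 2 * r * (0 * ((x 0 - r * x 3)/(2*r))) = x 1
          simp [hx1]
        · show 2 * r * (1 * (x 2/(2*r))) = x 2
          field_simp
        · show 0 * (x 2/(2*r)) - 1 * ((x 0 - r * x 3)/(2*r)) = x 3
          field_simp; linear_combination (-(1:K)) * ha
    · -- second case : x 1 = 0, A ≠ 0
      have hB : x 0 - r * x 3 = 0 := by
        have hmul : (x 0 - r * x 3) * (x 0 + r * x 3) = 0 := by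
          linear_combination hq + x 2 * hx1
        exact (mul_eq_zero.mp hmul).resolve_right ha
      refine ⟨![1, x 2 / (x 0 + r * x 3)], ![0, (x 0 + r * x 3)/(2*r)], ?_, ?_, ?_⟩
      · intro h; have := congrFun h 0; simp at this
      · intro h; have := congrFun h 1
        simp only [Matrix.cons_val_one, Matrix.head_cons, Pi.zero_apply, div_eq_zero_iff] at this
        rcases (div_eq_zero_iff.mp (by simpa using this : (x 0 + r * x 3)/(2*r) = 0)) with h' | h'
        · exact ha h'
        · exact (mul_ne_zero h2 hr) h'
      · funext i; fin_cases i
        · show r * (1 * ((x 0 + r * x 3)/(2*r)) + x 2 / (x 0 + r * x 3) * 0) = x 0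
          field_simp; linear_combination (-(x 0 + r * x 3)) * hB
        · show 2 * r * (1 * 0) = x 1
          simp [hx1]
        · show 2 * r * (x 2 / (x 0 + r * x 3) * ((x 0 + r * x 3)/(2*r))) = x 2
          field_simp
        · show 1 * ((x 0 + r * x 3)/(2*r)) - x 2 / (x 0 + r * x 3) * 0 = x 3
          field_simp; linear_combination (x 0 + r * x 3) * hB

end Stmt1Aux


open Projectivization

/-- the map `kappaVec` never vanishes on pairs of nonzero vectors, descends
to a map `κ : ℙ¹(K) × ℙ¹(K) → ℙ³(K)`, and `κ` is a bijection onto the quadric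
`x₀² − x₁x₂ − r²x₃² = 0`. -/
theorem stmt_1 (K : Type*) [Field K] (hchar : ringChar K ≠ 2) (r : Kˣ) :
    (∀ (u v : Fin 2 → K), u ≠ 0 → v ≠ 0 → kappaVec (r : K) u v ≠ 0) ∧
    ∃ κ : Projectivization K (Fin 2 → K) × Projectivization K (Fin 2 → K) →
        Projectivization K (Fin 4 → K),
      (∀ (u v : Fin 2 → K) (hu : u ≠ 0) (hv : v ≠ 0)
          (hw : kappaVec (r : K) u v ≠ 0),
          κ (Projectivization.mk K u hu, Projectivization.mk K v hv)
            = Projectivization.mk K (kappaVec (r : K) u v) hw) ∧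
      Set.BijOn κ Set.univ
        {p : Projectivization K (Fin 4 → K) |
          p.rep 0 ^ 2 - p.rep 1 * p.rep 2 - (r : K) ^ 2 * p.rep 3 ^ 2 = 0} := by
  have h2 : (2 : K) ≠ 0 := Ring.two_ne_zero hchar
  have hr : (r : K) ≠ 0 := r.ne_zero
  have nv : ∀ (u v : Fin 2 → K), u ≠ 0 → v ≠ 0 → kappaVec (r : K) u v ≠ 0 :=
    fun u v hu hv => Stmt1Aux.nonvanish hr h2 hu hv
  refine ⟨nv, ?_⟩
  refine ⟨fun pq => Projectivization.mk K (kappaVec (r : K) pq.1.rep pq.2.rep)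
      (nv _ _ pq.1.rep_nonzero pq.2.rep_nonzero), ?_, ?_⟩
  · -- compatibility with mk
    intro u v hu hv hw
    obtain ⟨a, ha⟩ := (mk_eq_mk_iff K _ _ (rep_nonzero _) hu).mp
      (mk_rep (Projectivization.mk K u hu))
    obtain ⟨b, hb⟩ := (mk_eq_mk_iff K _ _ (rep_nonzero _) hv).mp
      (mk_rep (Projectivization.mk K v hv))
    rw [Projectivization.mk_eq_mk_iff']
    refine ⟨(a : K) * (b : K), ?_⟩
    rw [← Stmt1Aux.kappa_smul]
    have ha' : (a : K) • u = (Projectivization.mk K u hu).rep := ha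
    have hb' : (b : K) • v = (Projectivization.mk K v hv).rep := hb
    rw [ha', hb']
  · constructor
    · -- MapsTo
      intro pq _
      simp only [Set.mem_setOf_eq]
      rw [Stmt1Aux.quad_mem]
      simp only [kappaVec, Matrix.cons_val_zero, Matrix.cons_val_one, Matrix.head_cons,
        Matrix.cons_val_two, Matrix.tail_cons, Matrix.cons_val_three]
      ring
    constructor
    · -- InjOn
      rintro ⟨p, q⟩ - ⟨p', q'⟩ - h
      simp only at h
      obtain ⟨c, hc⟩ := (mk_eq_mk_iff K _ _ _ _).mp h
      have hc' : kappaVec (r : K) p.rep q.rep = (c : K) • kappaVec (r : K) p'.rep q'.rep := by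
        rw [← hc]; rfl
      have hprod := Stmt1Aux.products hr h2 hc'
      have hprod' : ∀ j i, q.rep j * p.rep i = (c : K) * (q'.rep j * p'.rep i) :=
        fun j i => by linear_combination hprod i j
      obtain ⟨s, hs, hsu⟩ := Stmt1Aux.line c.ne_zero p.rep_nonzero q.rep_nonzero hprod
      obtain ⟨t, ht, htv⟩ := Stmt1Aux.line c.ne_zero q.rep_nonzero p.rep_nonzero hprod'
      have hp : p = p' := by
        rw [← mk_rep p, ← mk_rep p']
        exact (mk_eq_mk_iff' K _ _ _ _).mpr ⟨s, hsu.symm⟩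
      have hq : q = q' := by
        rw [← mk_rep q, ← mk_rep q']
        exact (mk_eq_mk_iff' K _ _ _ _).mpr ⟨t, htv.symm⟩
      rw [hp, hq]
    · -- SurjOn
      intro p hp
      simp only [Set.mem_setOf_eq] at hp
      obtain ⟨u, v, hu, hv, hkv⟩ := Stmt1Aux.surj_construct hr h2 p.rep p.rep_nonzero hp
      refine ⟨(Projectivization.mk K u hu, Projectivization.mk K v hv), Set.mem_univ _, ?_⟩
      simp only
      obtain ⟨a, ha⟩ := (mk_eq_mk_iff K _ _ (rep_nonzero _) hu).mp
        (mk_rep (Projectivization.mk K u hu))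
      obtain ⟨b, hb⟩ := (mk_eq_mk_iff K _ _ (rep_nonzero _) hv).mp
        (mk_rep (Projectivization.mk K v hv))
      have key : Projectivization.mk K
          (kappaVec (r : K) (Projectivization.mk K u hu).rep (Projectivization.mk K v hv).rep)
          (nv _ _ (rep_nonzero _) (rep_nonzero _)) = Projectivization.mk K p.rep p.rep_nonzero := by
        rw [Projectivization.mk_eq_mk_iff']
        refine ⟨(a : K) * (b : K), ?_⟩
        rw [← hkv, ← Stmt1Aux.kappa_smul]
        have ha' : (a : K) • u = (Projectivization.mk K u hu).rep := ha
        have hb' : (b : K) • v = (Projectivization.mk K v hv).rep := hb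
        rw [ha', hb']
      rw [key, mk_rep]
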